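/- Let O_1, ..., O_n (n ≥ 1) be pairwise independent real-valued random variables with E[O_i] = λ_i and Var[O_i] = σ² for each i, and let p = (1/n)·Σ_j O_j be the common prediction assigned to every sample in the bin. Then the expected mean squared error of the bin prediction satisfies E[(1/n)·Σ_i (λ_i − p)²] = (1/n)·Σ_i (λ_i − λ̄)² + σ²/n, where λ̄ = (1/n)·Σ_i λ_i. In particular the expected correctness of common discretization equals the population variance of the ground-truth values λ_1, ..., λ_n plus σ²/n. -/

import Mathlib

open MeasureTheory ProbabilityTheory Finset

/-- For pairwise independent observations `O i` with mean `lam i` and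
variance `σ²`, and common bin prediction `p = (1/n) ∑ⱼ O j`, the expected mean squared
error equals the population variance of the ground-truth values plus `σ²/n`. -/
theorem expected_correctness_common_discretization
    {Ω : Type*} [MeasurableSpace Ω] (μ : Measure Ω) [IsProbabilityMeasure μ]
    (n : ℕ) (hn : 1 ≤ n) (O : Fin n → Ω → ℝ) (lam : Fin n → ℝ) (σ2 : ℝ)
    (hL2 : ∀ i, MemLp (O i) 2 μ)
    (hmean : ∀ i, ∫ ω, O i ω ∂μ = lam i)
    (hvar : ∀ i, variance (O i) μ = σ2)
    (hindep : Pairwise fun i j => IndepFun (O i) (O j) μ)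
    (p : Ω → ℝ) (hp : ∀ ω, p ω = (1 / n : ℝ) * ∑ j, O j ω)
    (lbar : ℝ) (hlbar : lbar = (1 / n : ℝ) * ∑ i, lam i) :
    ∫ ω, (1 / n : ℝ) * ∑ i, (lam i - p ω) ^ 2 ∂μ
      = (1 / n : ℝ) * ∑ i, (lam i - lbar) ^ 2 + σ2 / n := by
  have hn0 : (n : ℝ) ≠ 0 := Nat.cast_ne_zero.mpr (by omega)
  -- the sum of observations
  have hpS : p = (1 / n : ℝ) • (∑ j, O j) := by
    funext ω; simp [hp, Finset.sum_apply]
  have hSL2 : MemLp (∑ j, O j) 2 μ := memLp_finset_sum' _ (fun i _ => hL2 i)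
  have hpL2 : MemLp p 2 μ := by rw [hpS]; exact hSL2.const_smul _
  -- expectation of p
  have hEp : ∫ ω, p ω ∂μ = lbar := by
    simp only [hp]
    rw [integral_const_mul, integral_finset_sum _
      (fun i _ => (hL2 i).integrable one_le_two)]
    simp [hmean, hlbar]
  -- variance of p
  have hvarS : variance (∑ j, O j) μ = n * σ2 := by
    rw [IndepFun.variance_sum (X := O) (fun i _ => hL2 i)
      (fun i _ j _ hij => hindep hij)]
    simp [hvar, Finset.card_univ]
  have hvarp : variance p μ = σ2 / n := by
    rw [hpS, variance_smul, hvarS]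
    field_simp
  -- sum of lam
  have hsum : ∑ i, lam i = n * lbar := by
    rw [hlbar]; field_simp
  -- pointwise identity
  have key : ∀ ω, (1 / n : ℝ) * ∑ i, (lam i - p ω) ^ 2
      = (1 / n : ℝ) * ∑ i, (lam i - lbar) ^ 2 + (p ω - lbar) ^ 2 := by
    intro ω
    have e : ∑ i, (lam i - p ω) ^ 2
        = ∑ i, ((lam i - lbar) ^ 2 + ((lbar - p ω) * (2 * lam i - p ω - lbar))) := by
      apply Finset.sum_congr rfl; intro i _; ring
    rw [e, Finset.sum_add_distrib, ← Finset.mul_sum]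
    have e2 : ∑ i, (2 * lam i - p ω - lbar) = 2 * (n * lbar) - n * (p ω + lbar) := by
      rw [Finset.sum_sub_distrib, Finset.sum_sub_distrib, ← Finset.mul_sum, hsum]
      simp [Finset.card_univ]
      ring
    rw [e2]
    field_simp
    ring
  -- rewrite integrand
  have hInt : Integrable (fun ω => (p ω - lbar) ^ 2) μ := by
    have := (hpL2.sub (memLp_const lbar)).integrable_sq
    simpa using this
  calc ∫ ω, (1 / n : ℝ) * ∑ i, (lam i - p ω) ^ 2 ∂μ
      = ∫ ω, ((1 / n : ℝ) * ∑ i, (lam i - lbar) ^ 2 + (p ω - lbar) ^ 2) ∂μ := by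
        exact integral_congr_ae (ae_of_all _ key)
    _ = (1 / n : ℝ) * ∑ i, (lam i - lbar) ^ 2 + ∫ ω, (p ω - lbar) ^ 2 ∂μ := by
        rw [integral_add (integrable_const _) hInt, integral_const]
        simp
    _ = (1 / n : ℝ) * ∑ i, (lam i - lbar) ^ 2 + σ2 / n := by
        congr 1
        rw [← hvarp, variance_eq_integral hpL2.aemeasurable, hEp]
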